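/- In the regularised RBM construction, the energy of pattern ξ^η equals 𝓔_η = -4Aλ_η + E_0 where E_0 = -2A ∑_α (V - λ_α). -/
import Mathlib

open Finset

/-- Energy of the regularised RBM with weights `W j α = 2 A v α j`, zero visible
biases and hidden biases `c α = 2 A (λ α - V)`. -/
noncomputable def raEnergy {V H : ℕ} (A : ℝ) (lam : Fin H → ℝ)
    (v : Fin H → Fin V → ℝ) (x : Fin V → ℝ) (h : Fin H → ℝ) : ℝ :=
  -(∑ j, ∑ α, x j * (2 * A * v α j) * h α)
    - ∑ α, (2 * A * (lam α - (V : ℝ))) * h α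

/-- Overlap `S α η = v^α · v^η`. -/
noncomputable def raOverlap {V H : ℕ} (v : Fin H → Fin V → ℝ) (α η : Fin H) : ℝ :=
  ∑ j, v α j * v η j

lemma raOverlap_sum_zero {V H : ℕ} (v : Fin H → Fin V → ℝ)
    (hpm : ∀ η j, v η j = 1 ∨ v η j = -1)
    (hdist : Function.Injective v)
    (hneg : ∀ η, ∃ η', ∀ j, v η' j = -(v η j)) (η : Fin H) :
    ∑ α, raOverlap v α η = 0 := by
  classical
  choose n hn using hneg
  refine Finset.sum_ninvolution n ?_ ?_ (fun a => Finset.mem_univ _) ?_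
  · intro a
    simp only [raOverlap, ← Finset.sum_add_distrib]
    apply Finset.sum_eq_zero
    intro j _
    rw [hn a j]; ring
  · intro a hfa hna
    apply hfa
    have hz : ∀ j, v a j = 0 := by
      intro j
      have := hn a j
      rw [hna] at this
      linarith
    simp [raOverlap, hz]
  · intro a
    apply hdist
    funext j
    rw [hn (n a) j, hn a j]; ring

lemma raOverlap_self {V H : ℕ} (v : Fin H → Fin V → ℝ)
    (hpm : ∀ η j, v η j = 1 ∨ v η j = -1) (η : Fin H) :
    raOverlap v η η = V := by
  have : ∀ j, v η j * v η j = 1 := by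
    intro j; rcases hpm η j with h | h <;> rw [h] <;> ring
  simp [raOverlap, this]

theorem regularised_pattern_energy
    (V H : ℕ) (A : ℝ) (hA : 0 < A) (lam : Fin H → ℝ)
    (v : Fin H → Fin V → ℝ)
    (hpm : ∀ η j, v η j = 1 ∨ v η j = -1)
    (hdist : Function.Injective v)
    (hneg : ∀ η, ∃ η', ∀ j, v η' j = -(v η j))
    (η : Fin H) :
    raEnergy A lam v (v η) (fun β => if β = η then (1 : ℝ) else -1)
      = -4 * A * lam η + (-2 * A * ∑ α, ((V : ℝ) - lam α)) := by
  classical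
  have key : ∀ F : Fin H → ℝ,
      ∑ α, F α * (if α = η then (1 : ℝ) else -1) = 2 * F η - ∑ α, F α := by
    intro F
    have h1 : ∀ α ∈ Finset.univ, F α * (if α = η then (1 : ℝ) else -1)
        = 2 * (if α = η then F α else 0) - F α := by
      intro α _; by_cases h : α = η <;> simp [h] <;> ring
    rw [Finset.sum_congr rfl h1, Finset.sum_sub_distrib, ← Finset.mul_sum,
      Finset.sum_ite_eq' Finset.univ η F]
    simp
  have hswap : (∑ j, ∑ α, v η j * (2 * A * v α j) * (if α = η then (1:ℝ) else -1))
      = ∑ α, (2 * A * raOverlap v α η) * (if α = η then (1:ℝ) else -1) := by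
    rw [Finset.sum_comm]
    refine Finset.sum_congr rfl fun α _ => ?_
    rw [raOverlap, Finset.mul_sum, Finset.sum_mul]
    refine Finset.sum_congr rfl fun j _ => ?_
    ring
  rw [raEnergy, hswap, key, key, raOverlap_self v hpm η, show (∑ α, 2 * A * raOverlap v α η)
      = 2 * A * ∑ α, raOverlap v α η from (Finset.mul_sum _ _ _).symm,
    raOverlap_sum_zero v hpm hdist hneg η]
  have e1 : (∑ α : Fin H, 2 * A * (lam α - (V:ℝ))) = 2*A*((∑ α, lam α) - H*V) := by
    rw [← Finset.mul_sum, Finset.sum_sub_distrib]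
    simp [Finset.card_univ, mul_comm]
  have e2 : (∑ α : Fin H, ((V:ℝ) - lam α)) = H*V - ∑ α, lam α := by
    rw [Finset.sum_sub_distrib]
    simp [Finset.card_univ, mul_comm]
  rw [e1, e2]; ring
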